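/- arXiv:2507.07729 — 4 statements merged into one kernel-verified Lean document; each statement's English description precedes it below -/
import Mathlib

section
/- Let s, y be vectors in ℝ^d with sᵀy > 0, and let W be a positive-definite d×d matrix satisfying W s = y. Let H_k be a symmetric d×d matrix, p > 0, ρ > 0. Then the matrix H_{k+1} := H_k + a s sᵀ - b (H_k y sᵀ + s yᵀ H_k), where b = 1/(sᵀy + ρ/p) and a = (1 + (yᵀ H_k y)·b)/(sᵀy + ρ/(2p)), satisfies the continuous Lyapunov equation H_{k+1}(y sᵀ + (ρ/(2p)) I) + (s yᵀ + (ρ/(2p)) I) H_{k+1} = 2 s sᵀ + (ρ/p) H_k. -/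
open Matrix

lemma mul_vmv {d : ℕ} (A : Matrix (Fin d) (Fin d) ℝ) (u v : Fin d → ℝ) :
    A * vecMulVec u v = vecMulVec (A *ᵥ u) v := by
  ext i j
  simp [Matrix.mul_apply, vecMulVec_apply, Matrix.mulVec, dotProduct,
    Finset.sum_mul, mul_assoc]

lemma vmv_mul {d : ℕ} (A : Matrix (Fin d) (Fin d) ℝ) (u v : Fin d → ℝ) :
    vecMulVec u v * A = vecMulVec u (v ᵥ* A) := by
  ext i j
  simp [Matrix.mul_apply, vecMulVec_apply, Matrix.vecMul, dotProduct,
    Finset.mul_sum, mul_assoc]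

lemma vmv_mulVec {d : ℕ} (u v w : Fin d → ℝ) :
    vecMulVec u v *ᵥ w = (v ⬝ᵥ w) • u := by
  ext i
  simp only [Matrix.mulVec, vecMulVec_apply, dotProduct, Pi.smul_apply, smul_eq_mul,
    Finset.sum_mul, Finset.mul_sum]
  apply Finset.sum_congr rfl
  intros; ring

lemma smul_vmv {d : ℕ} (c : ℝ) (u v : Fin d → ℝ) :
    vecMulVec (c • u) v = c • vecMulVec u v := by
  ext i j; simp [vecMulVec_apply, mul_assoc]

lemma vmv_smul {d : ℕ} (c : ℝ) (u v : Fin d → ℝ) :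
    vecMulVec u (c • v) = c • vecMulVec u v := by
  ext i j; simp [vecMulVec_apply]; ring

/-- S-BFGS update satisfies the continuous Lyapunov equation (Proposition 2.1). -/
theorem sbfgs_lyapunov {d : ℕ} (s y : Fin d → ℝ) (hsy : 0 < s ⬝ᵥ y)
    (W : Matrix (Fin d) (Fin d) ℝ) (hW : W.PosDef) (hWs : W *ᵥ s = y)
    (Hk : Matrix (Fin d) (Fin d) ℝ) (hHk : Hk.IsSymm)
    (p ρ : ℝ) (hp : 0 < p) (hρ : 0 < ρ)
    (b a : ℝ) (hb : b = 1 / (s ⬝ᵥ y + ρ / p))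
    (ha : a = (1 + (y ⬝ᵥ (Hk *ᵥ y)) * b) / (s ⬝ᵥ y + ρ / (2 * p)))
    (H1 : Matrix (Fin d) (Fin d) ℝ)
    (hH1 : H1 = Hk + a • vecMulVec s s
        - b • (vecMulVec (Hk *ᵥ y) s + vecMulVec s (Hk *ᵥ y))) :
    H1 * (vecMulVec y s + (ρ / (2 * p)) • (1 : Matrix (Fin d) (Fin d) ℝ))
      + (vecMulVec s y + (ρ / (2 * p)) • (1 : Matrix (Fin d) (Fin d) ℝ)) * H1
      = (2 : ℝ) • vecMulVec s s + (ρ / p) • Hk := by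
  have hpos1 : s ⬝ᵥ y + ρ / p ≠ 0 := by positivity
  have hpos2 : s ⬝ᵥ y + ρ / (2 * p) ≠ 0 := by positivity
  have hb' : b * (s ⬝ᵥ y + ρ / p) = 1 := by rw [hb]; field_simp
  have ha' : a * (s ⬝ᵥ y + ρ / (2 * p)) = 1 + (y ⬝ᵥ (Hk *ᵥ y)) * b := by
    rw [ha]; field_simp
  have hvm : y ᵥ* Hk = Hk *ᵥ y := by
    rw [← Matrix.mulVec_transpose, hHk.eq]
  have hcomm : (Hk *ᵥ y) ⬝ᵥ y = y ⬝ᵥ (Hk *ᵥ y) := dotProduct_comm _ _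
  have hys : y ⬝ᵥ s = s ⬝ᵥ y := dotProduct_comm _ _
  subst hH1
  simp only [add_mul, mul_add, sub_mul, mul_sub, smul_mul_assoc, mul_smul_comm,
    Matrix.mul_one, Matrix.one_mul, mul_vmv, vmv_mul, vmv_mulVec, smul_vmv, vmv_smul,
    Matrix.mulVec_smul, hvm, hcomm, hys, smul_add, smul_sub, smul_smul]
  match_scalars
  · linear_combination -hb'
  · linear_combination 2 * ha'
  · ring
  · linear_combination -hb'
end

section
/- Let s, y ∈ ℝ^d, ρ, p > 0, and suppose the curvature condition yᵀs ≥ m‖s‖² holds for some m > 0 and s ≠ 0. If H_k ∈ ℝ^{d×d} is symmetric positive definite, then the S-BFGS update H_{k+1} = H_k + a s sᵀ - b(H_k y sᵀ + s yᵀ H_k), with b = 1/(sᵀy + ρ/p) and a = (1 + b·yᵀH_k y)/(sᵀy + ρ/(2p)), is symmetric positive definite. -/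
open Matrix

private lemma vecMulVec_mulVec' {d : ℕ} (u v x : Fin d → ℝ) :
    vecMulVec u v *ᵥ x = (v ⬝ᵥ x) • u := by
  ext i
  simp [mulVec, dotProduct, vecMulVec_apply, Finset.mul_sum, Finset.sum_mul]
  apply Finset.sum_congr rfl
  intro j _; ring

private lemma sym_dot {d : ℕ} (Hk : Matrix (Fin d) (Fin d) ℝ) (h : Hk.IsHermitian)
    (u v : Fin d → ℝ) : u ⬝ᵥ (Hk *ᵥ v) = v ⬝ᵥ (Hk *ᵥ u) := by
  rw [dotProduct_mulVec, ← mulVec_transpose]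
  have : Hkᵀ = Hk := by
    have := h; rwa [IsHermitian, conjTranspose_eq_transpose_of_trivial] at this
  rw [this, dotProduct_comm]

/-- Positive-definiteness of the S-BFGS update (Lemma 2.2). -/
theorem sbfgs_posDef {d : ℕ} (s y : Fin d → ℝ) (m : ℝ) (hm : 0 < m) (hs : s ≠ 0)
    (hcurv : m * (s ⬝ᵥ s) ≤ y ⬝ᵥ s)
    (Hk : Matrix (Fin d) (Fin d) ℝ) (hHk : Hk.PosDef)
    (p ρ : ℝ) (hp : 0 < p) (hρ : 0 < ρ)
    (b a : ℝ) (hb : b = 1 / (s ⬝ᵥ y + ρ / p))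
    (ha : a = (1 + b * (y ⬝ᵥ (Hk *ᵥ y))) / (s ⬝ᵥ y + ρ / (2 * p)))
    (H1 : Matrix (Fin d) (Fin d) ℝ)
    (hH1 : H1 = Hk + a • vecMulVec s s
        - b • (vecMulVec (Hk *ᵥ y) s + vecMulVec s (Hk *ᵥ y))) :
    H1.PosDef := by
  have hss : 0 < s ⬝ᵥ s := by
    have h0 : 0 ≤ s ⬝ᵥ s := Finset.sum_nonneg fun i _ => mul_self_nonneg _
    have hne : s ⬝ᵥ s ≠ 0 := fun h => hs (dotProduct_self_eq_zero.mp h)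
    exact h0.lt_of_ne (Ne.symm hne)
  have hσ : 0 < s ⬝ᵥ y := by
    rw [dotProduct_comm]; nlinarith
  set q := y ⬝ᵥ (Hk *ᵥ y) with hqdef
  have hq : 0 ≤ q := by
    have := hHk.posSemidef.dotProduct_mulVec_nonneg y
    simpa using this
  set A := s ⬝ᵥ y + ρ / p with hA
  set B := s ⬝ᵥ y + ρ / (2 * p) with hB
  have hApos : 0 < A := by
    rw [hA]; have : 0 < ρ / p := div_pos hρ hp; linarith
  have hBpos : 0 < B := by
    rw [hB]; have : 0 < ρ / (2 * p) := div_pos hρ (by linarith); linarith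
  have hc : 0 < a - b ^ 2 * q := by
    have hAB : A - B = ρ / (2 * p) := by
      rw [hA, hB]
      field_simp
      ring
    have hkey : a - b ^ 2 * q = (A ^ 2 + q * (A - B)) / (A ^ 2 * B) := by
      rw [ha, hb]
      field_simp
      ring
    rw [hkey, hAB]
    have h2p : 0 < ρ / (2 * p) := div_pos hρ (by linarith)
    positivity
  rw [posDef_iff_dotProduct_mulVec]
  constructor
  · -- Hermitian
    have hHsym : ∀ i j, Hk i j = Hk j i := fun i j => by
      simpa using hHk.isHermitian.apply j i
    ext i j
    simp only [hH1, conjTranspose_apply, Matrix.sub_apply, Matrix.add_apply, Matrix.smul_apply, vecMulVec_apply,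
      smul_eq_mul, star_trivial]
    rw [hHsym j i]; ring
  · intro x hx
    have hxne : x ≠ 0 := hx
    set t := s ⬝ᵥ x with ht
    set w := y ⬝ᵥ (Hk *ᵥ x) with hw
    set X := x ⬝ᵥ (Hk *ᵥ x) with hX
    have hform : x ⬝ᵥ (H1 *ᵥ x) = X + a * t ^ 2 - 2 * b * t * w := by
      rw [hH1]
      simp only [sub_mulVec, add_mulVec, smul_mulVec, vecMulVec_mulVec',
        dotProduct_sub, dotProduct_add, dotProduct_smul, smul_eq_mul]
      have h1 : x ⬝ᵥ (Hk *ᵥ y) = w := sym_dot Hk hHk.isHermitian x y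
      have h2 : (Hk *ᵥ y) ⬝ᵥ x = w := by rw [dotProduct_comm]; exact h1
      rw [ht, hw, hX]
      simp only [h1, h2, dotProduct_comm x s, hw]
      ring
    set u := x - (b * t) • y with hu
    have huq : u ⬝ᵥ (Hk *ᵥ u) = X - 2 * b * t * w + b ^ 2 * t ^ 2 * q := by
      rw [hu]
      simp only [mulVec_sub, mulVec_smul, sub_dotProduct, dotProduct_sub,
        smul_dotProduct, dotProduct_smul, smul_eq_mul]
      have h1 : x ⬝ᵥ (Hk *ᵥ y) = w := sym_dot Hk hHk.isHermitian x y
      rw [ht, hw, hX, hqdef]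
      simp only [h1, hw]
      ring
    have huge : 0 ≤ u ⬝ᵥ (Hk *ᵥ u) := by
      have := hHk.posSemidef.dotProduct_mulVec_nonneg u
      simpa using this
    simp only [star_trivial]
    rw [hform]
    by_cases htz : t = 0
    · have hXpos : 0 < X := by
        have := hHk.dotProduct_mulVec_pos hxne
        simpa [hX] using this
      rw [htz]; ring_nf; simpa [hX] using hXpos
    · have ht2 : 0 < t ^ 2 := by positivity
      nlinarith [mul_pos hc ht2]
end

section
/- Let s, y ∈ ℝ^d with sᵀy > 0, H_k symmetric positive definite, ρ, p > 0, b = 1/(sᵀy + ρ/p), a = (1 + b·yᵀH_k y)/(sᵀy + ρ/(2p)). Then a - b²·(yᵀ H_k y) > 1/(sᵀy + ρ/p) > 0. -/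
open Matrix

/-- Key scalar inequality for positive-definiteness of the S-BFGS update. -/
theorem sbfgs_scalar_ineq {d : ℕ} (s y : Fin d → ℝ) (hsy : 0 < s ⬝ᵥ y)
    (Hk : Matrix (Fin d) (Fin d) ℝ) (hHk : Hk.PosDef)
    (p ρ : ℝ) (hp : 0 < p) (hρ : 0 < ρ)
    (b a : ℝ) (hb : b = 1 / (s ⬝ᵥ y + ρ / p))
    (ha : a = (1 + b * (y ⬝ᵥ (Hk *ᵥ y))) / (s ⬝ᵥ y + ρ / (2 * p))) :
    1 / (s ⬝ᵥ y + ρ / p) < a - b ^ 2 * (y ⬝ᵥ (Hk *ᵥ y))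
      ∧ 0 < 1 / (s ⬝ᵥ y + ρ / p) := by
  have hq : 0 ≤ y ⬝ᵥ (Hk *ᵥ y) := by
    have := hHk.posSemidef.dotProduct_mulVec_nonneg y
    simpa using this
  set t := s ⬝ᵥ y
  set q := y ⬝ᵥ (Hk *ᵥ y)
  have hA : 0 < t + ρ / p := by positivity
  have hB : 0 < t + ρ / (2 * p) := by positivity
  have hBA : t + ρ / (2 * p) < t + ρ / p := by
    have : ρ / (2 * p) < ρ / p := by
      apply div_lt_div_of_pos_left hρ hp
      linarith
    linarith
  constructor
  · rw [ha, hb]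
    have key : (1 + 1 / (t + ρ / p) * q) / (t + ρ / (2 * p)) - (1 / (t + ρ / p)) ^ 2 * q
        - 1 / (t + ρ / p)
        = ((t + ρ / p) - (t + ρ / (2 * p))) * ((t + ρ / p) + q)
          / ((t + ρ / p) ^ 2 * (t + ρ / (2 * p))) := by
      field_simp
      ring
    have hpos : 0 < ((t + ρ / p) - (t + ρ / (2 * p))) * ((t + ρ / p) + q)
        / ((t + ρ / p) ^ 2 * (t + ρ / (2 * p))) := by
      apply div_pos
      · apply mul_pos (by linarith) (by linarith)
      · positivity
    linarith
  · positivity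
end

section
/- Let H_k be symmetric positive definite with inverse B_k, let s, y ∈ ℝ^d satisfy sᵀy > 0, and let ρ, p > 0. Then the S-BFGS update H_{k+1} = H_k + a s sᵀ - b(H_k y sᵀ + s yᵀ H_k), with b = 1/(sᵀy + ρ/p) and a = (1 + b·yᵀH_k y)/(sᵀy + ρ/(2p)), satisfies det(H_{k+1}) = det(H_k)·[(1 - b·yᵀs)² + (sᵀB_k s)(a - b²·yᵀH_k y)], and consequently det(H_{k+1}) > det(H_k)·[ρ²/(p²(sᵀy + ρ/p)²) + (sᵀB_k s)/(sᵀy + ρ/p)]. -/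
open Matrix

/-- Determinant identity and lower bound for the S-BFGS update (Lemma 2.3). -/
theorem sbfgs_det_bound {d : ℕ} (s y : Fin d → ℝ) (hsy : 0 < s ⬝ᵥ y)
    (Hk Bk : Matrix (Fin d) (Fin d) ℝ) (hHk : Hk.PosDef)
    (hBk : Hk * Bk = 1) (hBk' : Bk * Hk = 1)
    (p ρ : ℝ) (hp : 0 < p) (hρ : 0 < ρ)
    (b a : ℝ) (hb : b = 1 / (s ⬝ᵥ y + ρ / p))
    (ha : a = (1 + b * (y ⬝ᵥ (Hk *ᵥ y))) / (s ⬝ᵥ y + ρ / (2 * p)))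
    (H1 : Matrix (Fin d) (Fin d) ℝ)
    (hH1 : H1 = Hk + a • vecMulVec s s
        - b • (vecMulVec (Hk *ᵥ y) s + vecMulVec s (Hk *ᵥ y))) :
    det H1 = det Hk * ((1 - b * (y ⬝ᵥ s)) ^ 2
        + (s ⬝ᵥ (Bk *ᵥ s)) * (a - b ^ 2 * (y ⬝ᵥ (Hk *ᵥ y))))
    ∧ det Hk * (ρ ^ 2 / (p ^ 2 * (s ⬝ᵥ y + ρ / p) ^ 2)
        + (s ⬝ᵥ (Bk *ᵥ s)) / (s ⬝ᵥ y + ρ / p)) < det H1 := by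
  have hsymm : Hkᵀ = Hk := by
    ext i j
    have := congrFun (congrFun hHk.1 i) j
    simpa using this
  -- the two rank-one directions
  set u₁ : Fin d → ℝ := a • (Bk *ᵥ s) - b • y with hu₁
  set u₂ : Fin d → ℝ := (-b) • (Bk *ᵥ s) with hu₂
  set U : Matrix (Fin d) (Fin 2) ℝ := Matrix.of (fun i j => ![u₁ i, u₂ i] j) with hU
  set V : Matrix (Fin 2) (Fin d) ℝ := Matrix.of (fun j i => ![s i, (Hk *ᵥ y) i] j) with hV
  have hHBs : Hk *ᵥ (Bk *ᵥ s) = s := by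
    rw [mulVec_mulVec, hBk, one_mulVec]
  have hW : H1 = Hk * (1 + U * V) := by
    rw [hH1, Matrix.mul_add, Matrix.mul_one, ← Matrix.mul_assoc]
    have hHu1 : Hk *ᵥ u₁ = a • s - b • (Hk *ᵥ y) := by
      rw [hu₁, mulVec_sub, mulVec_smul, mulVec_smul, hHBs]
    have hHu2 : Hk *ᵥ u₂ = (-b) • s := by
      rw [hu₂, mulVec_smul, hHBs]
    have hHU : ∀ i, (Hk * U) i 0 = (a • s - b • (Hk *ᵥ y)) i ∧ (Hk * U) i 1 = ((-b) • s) i := by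
      intro i
      constructor
      · rw [← hHu1]; simp [Matrix.mul_apply, hU, mulVec, dotProduct]
      · rw [← hHu2]; simp [Matrix.mul_apply, hU, mulVec, dotProduct]
    have : Hk * U * V = a • vecMulVec s s
        - b • (vecMulVec (Hk *ᵥ y) s + vecMulVec s (Hk *ᵥ y)) := by
      ext i j
      have h0 := (hHU i).1
      have h1 := (hHU i).2
      have hmm : (Hk * U * V) i j = (Hk * U) i 0 * V 0 j + (Hk * U) i 1 * V 1 j := by
        rw [Matrix.mul_apply, Fin.sum_univ_two]
      rw [hmm, h0, h1]
      simp [hV, vecMulVec_apply, Pi.smul_apply, Pi.sub_apply, smul_eq_mul]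
      ring
    rw [this]
    abel
  -- scalar abbreviations
  set σ : ℝ := s ⬝ᵥ y with hσ
  set T : ℝ := s ⬝ᵥ (Bk *ᵥ s) with hT
  set c : ℝ := y ⬝ᵥ (Hk *ᵥ y) with hc
  have hys : y ⬝ᵥ s = σ := dotProduct_comm y s
  -- entries of V * U
  have hVU00 : (V * U) 0 0 = a * T - b * σ := by
    have : (V * U) 0 0 = s ⬝ᵥ u₁ := by
      simp [Matrix.mul_apply, hU, hV, dotProduct]
    rw [this, hu₁, dotProduct_sub, dotProduct_smul, dotProduct_smul, smul_eq_mul, smul_eq_mul,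
      hT, hσ]
  have hVU01 : (V * U) 0 1 = -b * T := by
    have : (V * U) 0 1 = s ⬝ᵥ u₂ := by
      simp [Matrix.mul_apply, hU, hV, dotProduct]
    rw [this, hu₂, dotProduct_smul, smul_eq_mul, hT]
  have hHyBs : (Hk *ᵥ y) ⬝ᵥ (Bk *ᵥ s) = σ := by
    rw [dotProduct_comm, dotProduct_mulVec, ← mulVec_transpose, hsymm, hHBs, hσ]
  have hHyy : (Hk *ᵥ y) ⬝ᵥ y = c := by
    rw [dotProduct_comm, hc]
  have hVU10 : (V * U) 1 0 = a * σ - b * c := by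
    have : (V * U) 1 0 = (Hk *ᵥ y) ⬝ᵥ u₁ := by
      simp [Matrix.mul_apply, hU, hV, dotProduct]
    rw [this, hu₁, dotProduct_sub, dotProduct_smul, dotProduct_smul, smul_eq_mul, smul_eq_mul,
      hHyBs, hHyy]
  have hVU11 : (V * U) 1 1 = -b * σ := by
    have : (V * U) 1 1 = (Hk *ᵥ y) ⬝ᵥ u₂ := by
      simp [Matrix.mul_apply, hU, hV, dotProduct]
    rw [this, hu₂, dotProduct_smul, smul_eq_mul, hHyBs]
  have hdet2 : det (1 + V * U) = (1 - b * σ) ^ 2 + T * (a - b ^ 2 * c) := by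
    rw [det_fin_two]
    simp only [Matrix.add_apply, Matrix.one_apply]
    rw [hVU00, hVU01, hVU10, hVU11]
    norm_num
    ring
  have hdetH1 : det H1 = det Hk * ((1 - b * σ) ^ 2 + T * (a - b ^ 2 * c)) := by
    rw [hW, det_mul, det_one_add_mul_comm, hdet2]
  constructor
  · rw [hdetH1, hys]
  · -- positivity facts
    have hdHk : 0 < det Hk := hHk.det_pos
    have hsy' : (0:ℝ) < s ⬝ᵥ y := by rw [hσ] at hsy; exact hsy
    have hs0 : s ≠ 0 := by
      intro h; rw [h] at hsy'; simp at hsy'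
    have hy0 : y ≠ 0 := by
      intro h; rw [h] at hsy'; simp at hsy'
    have hBkpd : Bk.PosDef := by
      have : Hk⁻¹ = Bk := Matrix.inv_eq_right_inv hBk
      rw [← this]; exact hHk.inv
    have hTpos : 0 < T := by
      have := hBkpd.dotProduct_mulVec_pos hs0
      simpa [hT] using this
    have hcpos : 0 < c := by
      have := hHk.dotProduct_mulVec_pos hy0
      simpa [hc] using this
    set A : ℝ := σ + ρ / p with hA
    set A' : ℝ := σ + ρ / (2 * p) with hA'
    have hApos : 0 < A := by
      have : 0 < ρ / p := div_pos hρ hp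
      rw [hA]; linarith
    have hA'pos : 0 < A' := by
      have : 0 < ρ / (2 * p) := div_pos hρ (by linarith)
      rw [hA']; linarith
    have hAA' : A' < A := by
      rw [hA, hA']
      have : ρ / (2 * p) < ρ / p := by
        apply div_lt_div_of_pos_left hρ (by linarith) (by linarith)
      linarith
    have hbA : b = 1 / A := hb
    have haA : a = (1 + b * c) / A' := ha
    -- first term equals
    have hpne : p ≠ 0 := ne_of_gt hp
    have hAne : σ + ρ / p ≠ 0 := by
      have := hApos; rw [hA] at this; exact ne_of_gt this
    have hterm1 : (1 - b * σ) ^ 2 = ρ ^ 2 / (p ^ 2 * A ^ 2) := by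
      rw [hbA, hA]
      field_simp
      ring
    -- key scalar inequality
    have hkey : 1 / A < a - b ^ 2 * c := by
      have hdiff : a - b ^ 2 * c - 1 / A
          = (A - A') / (A * A') + c * (A - A') / (A' * A ^ 2) := by
        rw [haA, hbA]
        field_simp
        ring
      have hpos : 0 < (A - A') / (A * A') + c * (A - A') / (A' * A ^ 2) := by
        have h1 : 0 < (A - A') / (A * A') :=
          div_pos (by linarith) (mul_pos hApos hA'pos)
        have h2 : 0 < c * (A - A') / (A' * A ^ 2) :=
          div_pos (mul_pos hcpos (by linarith)) (mul_pos hA'pos (pow_pos hApos 2))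
        linarith
      linarith [hdiff ▸ hpos]
    rw [hdetH1]
    have : ρ ^ 2 / (p ^ 2 * A ^ 2) + T / A
        < (1 - b * σ) ^ 2 + T * (a - b ^ 2 * c) := by
      rw [hterm1]
      have : T / A < T * (a - b ^ 2 * c) := by
        rw [div_eq_mul_one_div]
        exact mul_lt_mul_of_pos_left hkey hTpos
      linarith
    calc det Hk * (ρ ^ 2 / (p ^ 2 * A ^ 2) + T / A)
        < det Hk * ((1 - b * σ) ^ 2 + T * (a - b ^ 2 * c)) :=
          mul_lt_mul_of_pos_left this hdHk
end
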